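/- Let K ⊆ K' be nonempty compact convex subsets of ℝ^d (d ≥ 1) with positive volume. Let 𝒜(Ω) = inf{|Ω Δ B|/|B| : B a ball with |B| = |Ω|} denote the Fraenkel asymmetry. Then |𝒜(K') − 𝒜(K)| ≤ 4·|K' \ K| / |K|. -/
import Mathlib


open MeasureTheory

noncomputable def fraenkelAsymmetry {d : ℕ} (Ω : Set (EuclideanSpace ℝ (Fin d))) : ℝ :=
  sInf {x : ℝ | ∃ (c : EuclideanSpace ℝ (Fin d)) (r : ℝ), 0 < r ∧
    volume (Metric.ball c r) = volume Ω ∧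
    x = (volume (symmDiff Ω (Metric.ball c r))).toReal / (volume (Metric.ball c r)).toReal}

section Aux

variable {d : ℕ}

lemma FA.nontrivE (hd : 1 ≤ d) : Nontrivial (EuclideanSpace ℝ (Fin d)) :=
  Module.nontrivial_of_finrank_pos (R := ℝ)
    (by rw [finrank_euclideanSpace_fin]; omega)

lemma FA.vol_ball (hd : 1 ≤ d) (c : EuclideanSpace ℝ (Fin d)) {r : ℝ} (hr : 0 ≤ r) :
    volume (Metric.ball c r)
      = ENNReal.ofReal (r ^ d) * volume (Metric.ball (0 : EuclideanSpace ℝ (Fin d)) 1) := by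
  haveI := FA.nontrivE hd
  have := Measure.addHaar_ball (volume : Measure (EuclideanSpace ℝ (Fin d))) c hr
  rwa [finrank_euclideanSpace_fin] at this

noncomputable def FA.radiusFor (d : ℕ) (v : ℝ) : ℝ :=
  (v / (volume (Metric.ball (0 : EuclideanSpace ℝ (Fin d)) 1)).toReal) ^ ((d : ℝ)⁻¹)

lemma FA.unitVol_pos (hd : 1 ≤ d) :
    0 < (volume (Metric.ball (0 : EuclideanSpace ℝ (Fin d)) 1)).toReal :=
  ENNReal.toReal_pos (Metric.measure_ball_pos volume 0 one_pos).ne' measure_ball_lt_top.ne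

lemma FA.radiusFor_pos (hd : 1 ≤ d) {v : ℝ} (hv : 0 < v) : 0 < FA.radiusFor d v :=
  Real.rpow_pos_of_pos (div_pos hv (FA.unitVol_pos hd)) _

lemma FA.vol_ball_radiusFor (hd : 1 ≤ d) (c : EuclideanSpace ℝ (Fin d)) {v : ℝ} (hv : 0 < v) :
    volume (Metric.ball c (FA.radiusFor d v)) = ENNReal.ofReal v := by
  have hVr := FA.unitVol_pos (d := d) hd
  have hnn : 0 ≤ v / (volume (Metric.ball (0 : EuclideanSpace ℝ (Fin d)) 1)).toReal :=
    div_nonneg hv.le hVr.le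
  rw [FA.vol_ball hd c (FA.radiusFor_pos hd hv).le]
  rw [FA.radiusFor, ← Real.rpow_natCast _ d, ← Real.rpow_mul hnn, inv_mul_cancel₀ (by
    exact_mod_cast (by omega : d ≠ 0)), Real.rpow_one]
  nth_rewrite 2 [← ENNReal.ofReal_toReal (measure_ball_lt_top
    (x := (0 : EuclideanSpace ℝ (Fin d))) (r := 1)).ne]
  rw [← ENNReal.ofReal_mul hnn, div_mul_cancel₀ _ hVr.ne']

lemma FA.radius_le (hd : 1 ≤ d) {c c' : EuclideanSpace ℝ (Fin d)} {r r' : ℝ}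
    (hr : 0 < r) (hr' : 0 < r')
    (h : volume (Metric.ball c r) ≤ volume (Metric.ball c' r')) : r ≤ r' := by
  rw [FA.vol_ball hd c hr.le, FA.vol_ball hd c' hr'.le] at h
  have hV0 : volume (Metric.ball (0 : EuclideanSpace ℝ (Fin d)) 1) ≠ 0 :=
    (Metric.measure_ball_pos volume 0 one_pos).ne'
  have hVt : volume (Metric.ball (0 : EuclideanSpace ℝ (Fin d)) 1) ≠ ⊤ :=
    measure_ball_lt_top.ne
  rw [ENNReal.mul_le_mul_iff_left hV0 hVt, ENNReal.ofReal_le_ofReal_iff (by positivity)] at h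
  exact (pow_le_pow_iff_left₀ hr.le hr'.le (by omega)).mp h

lemma FA.symmDiff_subset {α : Type*} {A A' C C' : Set α} (hA : A ⊆ A') (hC : C ⊆ C') :
    symmDiff A' C' ⊆ symmDiff A C ∪ ((A' \ A) ∪ (C' \ C)) := by
  intro x hx
  have h1 := @hA x
  have h2 := @hC x
  simp only [Set.mem_union, Set.mem_diff, Set.mem_symmDiff] at *
  tauto

lemma FA.symmDiff_subset' {α : Type*} {A A' C C' : Set α} (hA : A ⊆ A') (hC : C ⊆ C') :
    symmDiff A C ⊆ symmDiff A' C' ∪ ((A' \ A) ∪ (C' \ C)) := by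
  intro x hx
  have h1 := @hA x
  have h2 := @hC x
  simp only [Set.mem_union, Set.mem_diff, Set.mem_symmDiff] at *
  tauto

lemma FA.measure_symmDiff_le {A A' C C' : Set (EuclideanSpace ℝ (Fin d))}
    (hA : A ⊆ A') (hC : C ⊆ C') :
    volume (symmDiff A' C')
      ≤ volume (symmDiff A C) + (volume (A' \ A) + volume (C' \ C)) :=
  (measure_mono (FA.symmDiff_subset hA hC)).trans <|
    (measure_union_le _ _).trans (by gcongr; exact measure_union_le _ _)

lemma FA.measure_symmDiff_le' {A A' C C' : Set (EuclideanSpace ℝ (Fin d))}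
    (hA : A ⊆ A') (hC : C ⊆ C') :
    volume (symmDiff A C)
      ≤ volume (symmDiff A' C') + (volume (A' \ A) + volume (C' \ C)) :=
  (measure_mono (FA.symmDiff_subset' hA hC)).trans <|
    (measure_union_le _ _).trans (by gcongr; exact measure_union_le _ _)

end Aux

theorem fraenkel_asymmetry_stability (d : ℕ) (hd : 1 ≤ d)
    (K K' : Set (EuclideanSpace ℝ (Fin d)))
    (hK : IsCompact K) (hK' : IsCompact K')
    (hKc : Convex ℝ K) (hK'c : Convex ℝ K')
    (hKne : K.Nonempty) (hK'ne : K'.Nonempty)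
    (hsub : K ⊆ K') (hvol : 0 < volume K) :
    |fraenkelAsymmetry K' - fraenkelAsymmetry K| ≤
      4 * (volume (K' \ K)).toReal / (volume K).toReal := by
  classical
  set S : Set (EuclideanSpace ℝ (Fin d)) → Set ℝ := fun Ω =>
    {x : ℝ | ∃ (c : EuclideanSpace ℝ (Fin d)) (r : ℝ), 0 < r ∧
      volume (Metric.ball c r) = volume Ω ∧
      x = (volume (symmDiff Ω (Metric.ball c r))).toReal / (volume (Metric.ball c r)).toReal}
    with hS
  have hA : ∀ Ω, fraenkelAsymmetry Ω = sInf (S Ω) := fun Ω => rfl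
  -- basic measure facts
  have hKfin : volume K ≠ ⊤ := hK.measure_lt_top.ne
  have hK'fin : volume K' ≠ ⊤ := hK'.measure_lt_top.ne
  have hvol' : 0 < volume K' := hvol.trans_le (measure_mono hsub)
  set m : ℝ := (volume K).toReal with hm_def
  set m' : ℝ := (volume K').toReal with hm'_def
  set e : ℝ := (volume (K' \ K)).toReal with he_def
  have hefin : volume (K' \ K) ≠ ⊤ :=
    ((measure_mono (Set.diff_subset)).trans_lt hK'.measure_lt_top).ne
  have hm : 0 < m := ENNReal.toReal_pos hvol.ne' hKfin
  have hm' : 0 < m' := ENNReal.toReal_pos hvol'.ne' hK'fin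
  have he : 0 ≤ e := ENNReal.toReal_nonneg
  have hsum : volume K + volume (K' \ K) = volume K' := by
    rw [measure_add_diff hK.measurableSet.nullMeasurableSet K',
      Set.union_eq_self_of_subset_left hsub]
  have hmm' : m' = m + e := by
    rw [hm'_def, ← hsum, ENNReal.toReal_add hKfin hefin]
  have hdiffB : volume (K' \ K) = volume K' - volume K := by
    rw [measure_diff hsub hK.measurableSet.nullMeasurableSet hKfin]
  -- nonemptiness and boundedness of the infimum sets
  have hmemK : (fraenkelAsymmetry K' : ℝ) = sInf (S K') := rfl
  have hnonneg : ∀ Ω, ∀ x ∈ S Ω, (0:ℝ) ≤ x := by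
    rintro Ω x ⟨c, r, hr, hv, rfl⟩
    exact div_nonneg ENNReal.toReal_nonneg ENNReal.toReal_nonneg
  have hbdd : ∀ Ω, BddBelow (S Ω) := fun Ω => ⟨0, fun x hx => hnonneg Ω x hx⟩
  have hneK : (S K).Nonempty := by
    refine ⟨_, 0, FA.radiusFor d m, FA.radiusFor_pos hd hm, ?_, rfl⟩
    rw [FA.vol_ball_radiusFor hd 0 hm, hm_def, ENNReal.ofReal_toReal hKfin]
  have hneK' : (S K').Nonempty := by
    refine ⟨_, 0, FA.radiusFor d m', FA.radiusFor_pos hd hm', ?_, rfl⟩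
    rw [FA.vol_ball_radiusFor hd 0 hm', hm'_def, ENNReal.ofReal_toReal hK'fin]
  -- finiteness of symmetric differences
  have hsdfin : ∀ (Ω B : Set (EuclideanSpace ℝ (Fin d))), volume Ω ≠ ⊤ → volume B ≠ ⊤ →
      volume (symmDiff Ω B) ≠ ⊤ := by
    intro Ω B h1 h2
    refine ((measure_mono Set.symmDiff_subset_union).trans_lt ?_).ne
    exact (measure_union_le _ _).trans_lt (by
      rw [lt_top_iff_ne_top]; exact ENNReal.add_ne_top.mpr ⟨h1, h2⟩)
  -- Direction 1 : fraenkelAsymmetry K' ≤ x + 4e/m for each x ∈ S K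
  have dir1 : ∀ x ∈ S K, fraenkelAsymmetry K' ≤ x + 4 * e / m := by
    rintro x ⟨c, r, hr, hv, rfl⟩
    set r' : ℝ := FA.radiusFor d m' with hr'_def
    have hr' : 0 < r' := FA.radiusFor_pos hd hm'
    have hv' : volume (Metric.ball c r') = volume K' := by
      rw [hr'_def, FA.vol_ball_radiusFor hd c hm', hm'_def, ENNReal.ofReal_toReal hK'fin]
    have hrr' : r ≤ r' := FA.radius_le hd hr hr' (by
      rw [hv, hv']; exact measure_mono hsub)
    have hBB' : Metric.ball c r ⊆ Metric.ball c r' := Metric.ball_subset_ball hrr'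
    have hBdiff : volume (Metric.ball c r' \ Metric.ball c r) = volume (K' \ K) := by
      rw [measure_diff hBB' measurableSet_ball.nullMeasurableSet measure_ball_lt_top.ne,
        hv, hv', hdiffB]
    have hkey : volume (symmDiff K' (Metric.ball c r'))
        ≤ volume (symmDiff K (Metric.ball c r)) + (volume (K' \ K) + volume (K' \ K)) := by
      have := FA.measure_symmDiff_le (d := d) hsub hBB'
      rwa [hBdiff] at this
    have hsdfin1 : volume (symmDiff K (Metric.ball c r)) ≠ ⊤ :=
      hsdfin _ _ hKfin measure_ball_lt_top.ne
    have hkeyR : (volume (symmDiff K' (Metric.ball c r'))).toReal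
        ≤ (volume (symmDiff K (Metric.ball c r))).toReal + 2 * e := by
      have h2 := ENNReal.toReal_mono (by
          exact ENNReal.add_ne_top.mpr ⟨hsdfin1, ENNReal.add_ne_top.mpr ⟨hefin, hefin⟩⟩) hkey
      rw [ENNReal.toReal_add hsdfin1 (ENNReal.add_ne_top.mpr ⟨hefin, hefin⟩),
        ENNReal.toReal_add hefin hefin] at h2
      linarith
    have hmem : (volume (symmDiff K' (Metric.ball c r'))).toReal
        / (volume (Metric.ball c r')).toReal ∈ S K' := ⟨c, r', hr', hv', rfl⟩
    refine (csInf_le (hbdd K') hmem).trans ?_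
    rw [hv, hv']
    calc (volume (symmDiff K' (Metric.ball c r'))).toReal / m'
        ≤ ((volume (symmDiff K (Metric.ball c r))).toReal + 2 * e) / m := by
          apply div_le_div₀ (by positivity) hkeyR hm (by linarith)
      _ = (volume (symmDiff K (Metric.ball c r))).toReal / m + 2 * e / m := add_div _ _ _
      _ ≤ (volume (symmDiff K (Metric.ball c r))).toReal / m + 4 * e / m := by
          gcongr <;> linarith
  -- Direction 2 : fraenkelAsymmetry K ≤ x + 4e/m for each x ∈ S K'
  have dir2 : ∀ x ∈ S K', fraenkelAsymmetry K ≤ x + 4 * e / m := by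
    rintro x ⟨c, r', hr', hv', rfl⟩
    set r : ℝ := FA.radiusFor d m with hr_def
    have hr : 0 < r := FA.radiusFor_pos hd hm
    have hv : volume (Metric.ball c r) = volume K := by
      rw [hr_def, FA.vol_ball_radiusFor hd c hm, hm_def, ENNReal.ofReal_toReal hKfin]
    have hrr' : r ≤ r' := FA.radius_le hd hr hr' (by
      rw [hv, hv']; exact measure_mono hsub)
    have hBB' : Metric.ball c r ⊆ Metric.ball c r' := Metric.ball_subset_ball hrr'
    have hBdiff : volume (Metric.ball c r' \ Metric.ball c r) = volume (K' \ K) := by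
      rw [measure_diff hBB' measurableSet_ball.nullMeasurableSet measure_ball_lt_top.ne,
        hv, hv', hdiffB]
    have hkey : volume (symmDiff K (Metric.ball c r))
        ≤ volume (symmDiff K' (Metric.ball c r')) + (volume (K' \ K) + volume (K' \ K)) := by
      have := FA.measure_symmDiff_le' (d := d) hsub hBB'
      rwa [hBdiff] at this
    have hsdfin1 : volume (symmDiff K' (Metric.ball c r')) ≠ ⊤ :=
      hsdfin _ _ hK'fin measure_ball_lt_top.ne
    have hkeyR : (volume (symmDiff K (Metric.ball c r))).toReal
        ≤ (volume (symmDiff K' (Metric.ball c r'))).toReal + 2 * e := by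
      have h2 := ENNReal.toReal_mono (by
          exact ENNReal.add_ne_top.mpr ⟨hsdfin1, ENNReal.add_ne_top.mpr ⟨hefin, hefin⟩⟩) hkey
      rw [ENNReal.toReal_add hsdfin1 (ENNReal.add_ne_top.mpr ⟨hefin, hefin⟩),
        ENNReal.toReal_add hefin hefin] at h2
      linarith
    -- the element is at most 2
    have hx2 : (volume (symmDiff K' (Metric.ball c r'))).toReal ≤ 2 * m' := by
      have h1 : volume (symmDiff K' (Metric.ball c r')) ≤ volume K' + volume K' := by
        refine (measure_mono Set.symmDiff_subset_union).trans ?_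
        refine (measure_union_le _ _).trans ?_
        rw [hv']
      have h2 := ENNReal.toReal_mono (ENNReal.add_ne_top.mpr ⟨hK'fin, hK'fin⟩) h1
      rw [ENNReal.toReal_add hK'fin hK'fin] at h2
      rw [two_mul]; exact h2.trans_eq rfl
    have hmem : (volume (symmDiff K (Metric.ball c r))).toReal
        / (volume (Metric.ball c r)).toReal ∈ S K := ⟨c, r, hr, hv, rfl⟩
    refine (csInf_le (hbdd K) hmem).trans ?_
    rw [hv, hv']
    set t' : ℝ := (volume (symmDiff K' (Metric.ball c r'))).toReal with ht'_def
    have hx'le2 : t' / m' ≤ 2 := by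
      rw [div_le_iff₀ hm']; linarith
    have hx'm : t' / m' * m' = t' := div_mul_cancel₀ _ hm'.ne'
    have h4 : 4 * e / m * m = 4 * e := div_mul_cancel₀ _ hm.ne'
    rw [div_le_iff₀ hm]
    nlinarith [hkeyR, mul_nonneg (sub_nonneg.mpr hx'le2) he, hx'm, h4, hmm']
  -- combine
  have hbound1 : fraenkelAsymmetry K' - fraenkelAsymmetry K ≤ 4 * e / m := by
    rw [sub_le_iff_le_add, add_comm, ← sub_le_iff_le_add]
    rw [hA K]
    exact le_csInf hneK (fun x hx => by linarith [dir1 x hx])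
  have hbound2 : fraenkelAsymmetry K - fraenkelAsymmetry K' ≤ 4 * e / m := by
    rw [sub_le_iff_le_add, add_comm, ← sub_le_iff_le_add]
    rw [hA K']
    exact le_csInf hneK' (fun x hx => by linarith [dir2 x hx])
  rw [abs_sub_le_iff]
  exact ⟨hbound1, hbound2⟩
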